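/- arXiv:1610.03479 — 2 statements merged into one kernel-verified Lean document; each statement's English description precedes it below -/
import Mathlib

section
/- For all ξ, η ∈ ℝ² with ξ, η, ξ−η nonzero, the gradient of the phase Φ(ξ,η) = ξ₁/|ξ|² − (ξ₁−η₁)/|ξ−η|² − η₁/|η|² with respect to ξ satisfies |∇_ξ Φ(ξ,η)| = |η| |η−2ξ| / (|ξ−η|² |ξ|²). -/
open scoped RealInnerProductSpace

noncomputable def Phi (ξ η : EuclideanSpace ℝ (Fin 2)) : ℝ :=
  ξ 0 / ‖ξ‖ ^ 2 - (ξ 0 - η 0) / ‖ξ - η‖ ^ 2 - η 0 / ‖η‖ ^ 2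

abbrev E2 := EuclideanSpace ℝ (Fin 2)

lemma normsq_eq (x : E2) : ‖x‖ ^ 2 = x 0 ^ 2 + x 1 ^ 2 := by
  rw [EuclideanSpace.norm_eq, Real.sq_sqrt (by positivity)]
  simp [Fin.sum_univ_two, sq_abs]

lemma hasFDerivAt_aux (x : E2) (hx : x ≠ 0) :
    HasFDerivAt (fun θ : E2 => θ 0 / ‖θ‖ ^ 2)
      (InnerProductSpace.toDual ℝ E2
        ((‖x‖ ^ 2)⁻¹ • (EuclideanSpace.single 0 (1:ℝ)) - (2 * x 0 / ‖x‖ ^ 4) • x)) x := by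
  have hA : ‖x‖ ^ 2 ≠ 0 := pow_ne_zero 2 (norm_ne_zero_iff.mpr hx)
  have h1 : HasFDerivAt (fun θ : E2 => θ 0) (EuclideanSpace.proj (𝕜 := ℝ) (0 : Fin 2)) x :=
    (EuclideanSpace.proj (𝕜 := ℝ) (0 : Fin 2)).hasFDerivAt
  have h2 : HasFDerivAt (fun θ : E2 => ‖θ‖ ^ 2) (2 • (innerSL ℝ x)) x :=
    (hasStrictFDerivAt_norm_sq x).hasFDerivAt
  have h3 := (hasFDerivAt_inv' (𝕜 := ℝ) hA).comp x h2
  have h4 := h1.mul h3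
  have h5 : HasFDerivAt (fun θ : E2 => θ 0 / ‖θ‖ ^ 2)
      (x 0 • ((-ContinuousLinearMap.mulLeftRight ℝ ℝ (‖x‖ ^ 2)⁻¹ (‖x‖ ^ 2)⁻¹).comp
        (2 • (innerSL ℝ x))) + (‖x‖ ^ 2)⁻¹ • EuclideanSpace.proj (𝕜 := ℝ) (0 : Fin 2)) x := by
    refine h4.congr_of_eventuallyEq (Filter.Eventually.of_forall fun θ => ?_)
    simp [div_eq_mul_inv]
  refine h5.congr_fderiv ?_
  ext w
  simp only [InnerProductSpace.toDual_apply_apply, inner_sub_left, real_inner_smul_left,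
    EuclideanSpace.inner_single_left, ContinuousLinearMap.add_apply,
    ContinuousLinearMap.smul_apply, ContinuousLinearMap.comp_apply,
    ContinuousLinearMap.neg_apply, ContinuousLinearMap.mulLeftRight_apply,
    innerSL_apply_apply, smul_eq_mul, map_one, RingHom.id_apply, conj_trivial, PiLp.proj_apply]
  have : ‖x‖ ^ 4 = (‖x‖ ^ 2) * (‖x‖ ^ 2) := by ring
  rw [this]
  field_simp
  ring



set_option maxHeartbeats 1000000 in
lemma frac0 (a b c d : ℝ) (hA : a^2+b^2 ≠ 0) (hB : (a-c)^2+(b-d)^2 ≠ 0) :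
    (a^2+b^2)⁻¹ - 2*a/(a^2+b^2)^2*a - (((a-c)^2+(b-d)^2)⁻¹ - 2*(a-c)/((a-c)^2+(b-d)^2)^2*(a-c))
    = (((a-c)^2+(b-d)^2)^2*((a^2+b^2) - 2*a^2) - (a^2+b^2)^2*(((a-c)^2+(b-d)^2)-2*(a-c)^2))
      / ((a^2+b^2)^2*((a-c)^2+(b-d)^2)^2) := by
  field_simp

set_option maxHeartbeats 1000000 in
lemma frac1 (a b c d : ℝ) (hA : a^2+b^2 ≠ 0) (hB : (a-c)^2+(b-d)^2 ≠ 0) :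
    -(2*a/(a^2+b^2)^2*b) + 2*(a-c)/((a-c)^2+(b-d)^2)^2*(b-d)
    = (-(2*a*b*((a-c)^2+(b-d)^2)^2) + 2*(a-c)*(b-d)*(a^2+b^2)^2)
      / ((a^2+b^2)^2*((a-c)^2+(b-d)^2)^2) := by
  field_simp

set_option maxHeartbeats 1000000 in
lemma key (a b c d : ℝ) (hA : a^2+b^2 ≠ 0) (hB : (a-c)^2+(b-d)^2 ≠ 0) :
    ((a^2+b^2)⁻¹ - 2*a/(a^2+b^2)^2*a
        - (((a-c)^2+(b-d)^2)⁻¹ - 2*(a-c)/((a-c)^2+(b-d)^2)^2*(a-c)))^2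
    + (-(2*a/(a^2+b^2)^2*b) + 2*(a-c)/((a-c)^2+(b-d)^2)^2*(b-d))^2
    = (c^2+d^2)*((c-2*a)^2+(d-2*b)^2)/(((a-c)^2+(b-d)^2)^2*(a^2+b^2)^2) := by
  have hD : (a^2+b^2)^2*((a-c)^2+(b-d)^2)^2 ≠ 0 :=
    mul_ne_zero (pow_ne_zero _ hA) (pow_ne_zero _ hB)
  rw [frac0 a b c d hA hB, frac1 a b c d hA hB, div_pow, div_pow, ← add_div]
  rw [show (((a-c)^2+(b-d)^2)^2*((a^2+b^2) - 2*a^2)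
        - (a^2+b^2)^2*(((a-c)^2+(b-d)^2)-2*(a-c)^2))^2
      + (-(2*a*b*((a-c)^2+(b-d)^2)^2) + 2*(a-c)*(b-d)*(a^2+b^2)^2)^2
      = ((c^2+d^2)*((c-2*a)^2+(d-2*b)^2)) * ((a^2+b^2)^2*((a-c)^2+(b-d)^2)^2) from by ring]
  rw [pow_two ((a^2+b^2)^2*((a-c)^2+(b-d)^2)^2), mul_div_mul_right _ _ hD]
  rw [mul_comm (((a-c)^2+(b-d)^2)^2) ((a^2+b^2)^2)]

set_option maxHeartbeats 1000000 in
theorem norm_grad_xi_Phi (ξ η : EuclideanSpace ℝ (Fin 2))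
    (hξ : ξ ≠ 0) (hη : η ≠ 0) (hξη : ξ - η ≠ 0) :
    ‖gradient (fun θ => Phi θ η) ξ‖ =
      ‖η‖ * ‖η - (2 : ℝ) • ξ‖ / (‖ξ - η‖ ^ 2 * ‖ξ‖ ^ 2) := by
  set v1 : E2 := (‖ξ‖ ^ 2)⁻¹ • (EuclideanSpace.single 0 (1:ℝ)) - (2 * ξ 0 / ‖ξ‖ ^ 4) • ξ with hv1
  set v2 : E2 := (‖ξ - η‖ ^ 2)⁻¹ • (EuclideanSpace.single 0 (1:ℝ))
      - (2 * (ξ - η) 0 / ‖ξ - η‖ ^ 4) • (ξ - η) with hv2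
  have hfa := hasFDerivAt_aux ξ hξ
  have hshift : HasFDerivAt (fun θ : E2 => θ - η) (ContinuousLinearMap.id ℝ E2) ξ :=
    (hasFDerivAt_id ξ).sub_const η
  have hfb := (hasFDerivAt_aux (ξ - η) hξη).comp ξ hshift
  have hconst : HasFDerivAt (fun _ : E2 => η 0 / ‖η‖ ^ 2) (0 : E2 →L[ℝ] ℝ) ξ :=
    hasFDerivAt_const _ _
  have htot := (hfa.sub hfb).sub hconst
  have hgrad : HasGradientAt (fun θ => Phi θ η) (v1 - v2) ξ := by
    rw [hasGradientAt_iff_hasFDerivAt]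
    refine htot.congr_fderiv ?_
    symm
    rw [map_sub, ContinuousLinearMap.comp_id, sub_zero]
  rw [hgrad.gradient]
  have hAne : (ξ 0) ^ 2 + (ξ 1) ^ 2 ≠ 0 := by
    rw [← normsq_eq]; exact pow_ne_zero 2 (norm_ne_zero_iff.mpr hξ)
  have hBne : ((ξ - η) 0) ^ 2 + ((ξ - η) 1) ^ 2 ≠ 0 := by
    rw [← normsq_eq]; exact pow_ne_zero 2 (norm_ne_zero_iff.mpr hξη)
  have hR : (0:ℝ) ≤ ‖η‖ * ‖η - (2 : ℝ) • ξ‖ / (‖ξ - η‖ ^ 2 * ‖ξ‖ ^ 2) := by positivity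
  rw [← Real.sqrt_sq (norm_nonneg (v1 - v2)), ← Real.sqrt_sq hR]
  congr 1
  have h4A : ‖ξ‖ ^ 4 = ((ξ 0) ^ 2 + (ξ 1) ^ 2) ^ 2 := by
    rw [show (4:ℕ) = 2*2 from rfl, pow_mul, normsq_eq]
  have h4B : ‖ξ - η‖ ^ 4 = (((ξ - η) 0) ^ 2 + ((ξ - η) 1) ^ 2) ^ 2 := by
    rw [show (4:ℕ) = 2*2 from rfl, pow_mul, normsq_eq]
  rw [div_pow, mul_pow, mul_pow, normsq_eq (v1 - v2), normsq_eq η, normsq_eq (η - (2:ℝ) • ξ),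
    normsq_eq ξ, normsq_eq (ξ - η)]
  simp only [hv1, hv2, h4A, h4B, PiLp.sub_apply, PiLp.smul_apply, smul_eq_mul,
    EuclideanSpace.single_apply]
  norm_num
  rw [normsq_eq ξ, normsq_eq (ξ - η)]
  have e0 : (ξ - η) 0 = ξ 0 - η 0 := rfl
  have e1 : (ξ - η) 1 = ξ 1 - η 1 := rfl
  simp only [e0, e1] at hBne ⊢
  exact key (ξ 0) (ξ 1) (η 0) (η 1) hAne hBne
end

section
/- Let ξ, η ∈ ℝ² with η ≠ 0 and ξ−η ≠ 0. Characterization of the space-resonant set: ∇_η Φ(ξ,η) = 0 if and only if ξ = 0 or ξ = 2η, where Φ(ξ,η) = ξ₁/|ξ|² − (ξ₁−η₁)/|ξ−η|² − η₁/|η|² (for the purposes of this statement one may replace Φ by Φ̃(ξ,η) = −(ξ₁−η₁)/|ξ−η|² − η₁/|η|², which has the same η-gradient; if additionally ξ ≠ 0 assume all three points ξ, η, ξ−η nonzero). -/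
open InnerProductSpace

noncomputable def gradAux (x : EuclideanSpace ℝ (Fin 2)) : EuclideanSpace ℝ (Fin 2) :=
  ((‖x‖^2)^2)⁻¹ • ((‖x‖^2) • EuclideanSpace.single 0 (1:ℝ) - (2 * x 0) • x)

lemma norm_sq_eq' (x : EuclideanSpace ℝ (Fin 2)) : ‖x‖^2 = x 0^2 + x 1^2 := by
  rw [← real_inner_self_eq_norm_sq]
  simp only [PiLp.inner_apply, Fin.sum_univ_two, RCLike.inner_apply, conj_trivial]
  ring

lemma gradAux_apply (x : EuclideanSpace ℝ (Fin 2)) (i : Fin 2) :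
    gradAux x i = ((‖x‖^2)^2)⁻¹ *
      (‖x‖^2 * (EuclideanSpace.single 0 (1:ℝ) : EuclideanSpace ℝ (Fin 2)) i - 2 * x 0 * x i) := by
  simp [gradAux, PiLp.smul_apply, PiLp.sub_apply, mul_sub]

lemma gradAux_neg (x : EuclideanSpace ℝ (Fin 2)) : gradAux (-x) = gradAux x := by
  simp [gradAux, norm_neg, PiLp.neg_apply, mul_neg, neg_smul, smul_neg, neg_neg]

lemma hasFDerivAt_aux_s3 (x : EuclideanSpace ℝ (Fin 2)) (hx : x ≠ 0) :
    HasFDerivAt (fun θ : EuclideanSpace ℝ (Fin 2) => θ 0 / ‖θ‖^2)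
      (toDual ℝ (EuclideanSpace ℝ (Fin 2)) (gradAux x)) x := by
  have hx2 : ‖x‖^2 ≠ 0 := pow_ne_zero _ (norm_ne_zero_iff.mpr hx)
  have hA : HasFDerivAt (fun θ : EuclideanSpace ℝ (Fin 2) => θ 0)
      (EuclideanSpace.proj (𝕜 := ℝ) (0 : Fin 2)) x := by
    exact (EuclideanSpace.proj (𝕜 := ℝ) (0 : Fin 2)).hasFDerivAt
  have hB : HasFDerivAt (fun θ : EuclideanSpace ℝ (Fin 2) => ‖θ‖^2)
      ((fderivInnerCLM ℝ (x, x)).comp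
        ((ContinuousLinearMap.id ℝ _).prod (ContinuousLinearMap.id ℝ _))) x := by
    have h := (hasFDerivAt_id x).inner ℝ (hasFDerivAt_id x)
    simp only [real_inner_self_eq_norm_sq] at h
    exact h
  have hC := (hasDerivAt_inv hx2).comp_hasFDerivAt x hB
  have hM := hA.mul hC
  have hfun : (fun θ : EuclideanSpace ℝ (Fin 2) => θ 0 / ‖θ‖^2)
      = fun θ : EuclideanSpace ℝ (Fin 2) => θ 0 * (‖θ‖^2)⁻¹ := by
    funext θ; rw [div_eq_mul_inv]
  rw [hfun]
  refine hM.congr_fderiv ?_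
  ext v
  simp only [toDual_apply_apply, gradAux, real_inner_smul_left, inner_sub_left,
    EuclideanSpace.inner_single_left, ContinuousLinearMap.add_apply,
    ContinuousLinearMap.smul_apply, ContinuousLinearMap.comp_apply,
    ContinuousLinearMap.prod_apply, ContinuousLinearMap.id_apply, fderivInnerCLM_apply,
    PiLp.proj_apply, smul_eq_mul, conj_trivial, Function.comp_apply]
  rw [real_inner_comm v x]
  field_simp
  ring

lemma scalar_resonance (a b c d : ℝ) (hx : a^2+b^2 ≠ 0) (hy : c^2+d^2 ≠ 0)
    (h1 : (b^2 - a^2) * (c^2+d^2)^2 = (d^2 - c^2) * (a^2+b^2)^2)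
    (h2 : a*b*(c^2+d^2)^2 = c*d*(a^2+b^2)^2) :
    (a = c ∧ b = d) ∨ (a = -c ∧ b = -d) := by
  have hx' : 0 < a^2+b^2 := lt_of_le_of_ne (by positivity) (Ne.symm hx)
  have hy' : 0 < c^2+d^2 := lt_of_le_of_ne (by positivity) (Ne.symm hy)
  have key : (a^2+b^2)^2*(c^2+d^2)^2 * ((c^2+d^2)^2)
      = (a^2+b^2)^2*(c^2+d^2)^2 * ((a^2+b^2)^2) := by
    linear_combination ((b^2-a^2)*(c^2+d^2)^2 + (d^2-c^2)*(a^2+b^2)^2) * h1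
      + (4*a*b*(c^2+d^2)^2 + 4*c*d*(a^2+b^2)^2) * h2
  have key2 : (c^2+d^2)^2 = (a^2+b^2)^2 := mul_left_cancel₀ (by positivity) key
  have hs : a^2+b^2 = c^2+d^2 := by nlinarith [key2, hx', hy']
  have e1 : b^2 - a^2 = d^2 - c^2 := by
    have h := h1; rw [hs] at h; exact mul_right_cancel₀ (pow_ne_zero _ hy) h
  have e2 : a*b = c*d := by
    have h := h2; rw [hs] at h; exact mul_right_cancel₀ (pow_ne_zero _ hy) h
  have ea : a^2 = c^2 := by linarith
  have eb : b^2 = d^2 := by linarith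
  rcases mul_eq_zero.mp (show (a - c)*(a + c) = 0 by linear_combination ea) with ha | ha
  all_goals rcases mul_eq_zero.mp (show (b - d)*(b + d) = 0 by linear_combination eb) with hb | hb
  · left; constructor <;> linarith
  · have ha' : a = c := by linarith
    have hb' : b = -d := by linarith
    have h3 : a * b = -(c*d) := by rw [ha', hb']; ring
    have hcd : c * d = 0 := by linarith
    rcases mul_eq_zero.mp hcd with h | h
    · right; constructor <;> linarith
    · left; constructor <;> linarith
  · have ha' : a = -c := by linarith
    have hb' : b = d := by linarith
    have h3 : a * b = -(c*d) := by rw [ha', hb']; ring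
    have hcd : c * d = 0 := by linarith
    rcases mul_eq_zero.mp hcd with h | h
    · left; constructor <;> linarith
    · right; constructor <;> linarith
  · right; constructor <;> linarith

theorem space_resonant_set (ξ η : EuclideanSpace ℝ (Fin 2))
    (hη : η ≠ 0) (hξη : ξ - η ≠ 0) :
    gradient
        (fun θ : EuclideanSpace ℝ (Fin 2) =>
          -((ξ 0 - θ 0) / ‖ξ - θ‖ ^ 2) - θ 0 / ‖θ‖ ^ 2) η = 0 ↔
      ξ = 0 ∨ ξ = (2 : ℝ) • η := by
  have h1 := hasFDerivAt_aux_s3 η hη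
  have h2 := hasFDerivAt_aux_s3 (ξ - η) hξη
  have hu : HasFDerivAt (fun θ : EuclideanSpace ℝ (Fin 2) => ξ - θ)
      (-(ContinuousLinearMap.id ℝ (EuclideanSpace ℝ (Fin 2)))) η := by
    have := (hasFDerivAt_const (𝕜 := ℝ) ξ η).sub (hasFDerivAt_id (𝕜 := ℝ) η)
    exact this.congr_fderiv (by simp)
  have h3 := ((h2.comp η hu).neg).sub h1
  have hL : (toDual ℝ (EuclideanSpace ℝ (Fin 2))) (gradAux (ξ - η) - gradAux η)
      = -ContinuousLinearMap.comp ((toDual ℝ (EuclideanSpace ℝ (Fin 2))) (gradAux (ξ - η)))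
          (-ContinuousLinearMap.id ℝ (EuclideanSpace ℝ (Fin 2))) -
        (toDual ℝ (EuclideanSpace ℝ (Fin 2))) (gradAux η) := by
    refine ContinuousLinearMap.ext fun v => ?_
    simp [inner_sub_left]
  rw [← hL] at h3
  have hfun : (-(fun θ : EuclideanSpace ℝ (Fin 2) => θ 0 / ‖θ‖ ^ 2) ∘ (HSub.hSub ξ) -
        fun θ : EuclideanSpace ℝ (Fin 2) => θ 0 / ‖θ‖ ^ 2)
      = (fun θ : EuclideanSpace ℝ (Fin 2) =>
        -((ξ 0 - θ 0) / ‖ξ - θ‖ ^ 2) - θ 0 / ‖θ‖ ^ 2) := by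
    funext θ
    simp [Function.comp, PiLp.sub_apply]
  rw [hfun] at h3
  have hgrad : HasGradientAt
      (fun θ : EuclideanSpace ℝ (Fin 2) =>
        -((ξ 0 - θ 0) / ‖ξ - θ‖ ^ 2) - θ 0 / ‖θ‖ ^ 2)
      (gradAux (ξ - η) - gradAux η) η := hasGradientAt_iff_hasFDerivAt.mpr h3
  rw [hgrad.gradient, sub_eq_zero]
  have hsx : ‖ξ - η‖^2 = (ξ 0 - η 0)^2 + (ξ 1 - η 1)^2 := by
    rw [norm_sq_eq']; simp [PiLp.sub_apply]
  have hsy : ‖η‖^2 = (η 0)^2 + (η 1)^2 := norm_sq_eq' η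
  have hxne : (ξ 0 - η 0)^2 + (ξ 1 - η 1)^2 ≠ 0 := by
    rw [← hsx]; exact pow_ne_zero _ (norm_ne_zero_iff.mpr hξη)
  have hyne : (η 0)^2 + (η 1)^2 ≠ 0 := by
    rw [← hsy]; exact pow_ne_zero _ (norm_ne_zero_iff.mpr hη)
  constructor
  · intro h
    have h0 := congrFun (congrArg WithLp.ofLp h) (0 : Fin 2)
    have h1' := congrFun (congrArg WithLp.ofLp h) (1 : Fin 2)
    rw [gradAux_apply, gradAux_apply] at h0 h1'
    simp only [EuclideanSpace.single_apply, if_pos rfl] at h0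
    simp only [EuclideanSpace.single_apply] at h1'
    rw [hsx, hsy] at h0 h1'
    simp only [PiLp.sub_apply] at h0 h1'
    norm_num at h0 h1'
    set a := ξ 0 - η 0 with ha
    set b := ξ 1 - η 1 with hb
    set c := η 0 with hc
    set d := η 1 with hd
    have s1 : (b^2 - a^2) * (c^2+d^2)^2 = (d^2 - c^2) * (a^2+b^2)^2 := by
      field_simp at h0
      linear_combination h0
    have s2 : a*b*(c^2+d^2)^2 = c*d*(a^2+b^2)^2 := by
      field_simp at h1'
      linear_combination h1'
    rcases scalar_resonance a b c d hxne hyne s1 s2 with ⟨e1, e2⟩ | ⟨e1, e2⟩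
    · right
      ext i
      fin_cases i
      · show ξ 0 = ((2:ℝ) • η) 0
        simp only [PiLp.smul_apply, smul_eq_mul]
        rw [ha, hc] at e1; linarith
      · show ξ 1 = ((2:ℝ) • η) 1
        simp only [PiLp.smul_apply, smul_eq_mul]
        rw [hb, hd] at e2; linarith
    · left
      ext i
      fin_cases i
      · show ξ 0 = (0 : EuclideanSpace ℝ (Fin 2)) 0
        simp only [PiLp.zero_apply]
        rw [ha, hc] at e1; linarith
      · show ξ 1 = (0 : EuclideanSpace ℝ (Fin 2)) 1
        simp only [PiLp.zero_apply]
        rw [hb, hd] at e2; linarith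
  · rintro (rfl | rfl)
    · rw [zero_sub, gradAux_neg]
    · have h2η : (2 : ℝ) • η - η = η := by module
      rw [h2η]
end
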